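/- In the Navigation causal Kripke setting, each of the primitive events (q,w1) = 1, (q,w2) = 1, and (q,w3) = 1 is an actual cause of r = 1 at world w1 by all three HP definitions (original, updated, and modified). -/

import Mathlib

open Classical

noncomputable section

/-- A causal Kripke model `K = (S, W, Rel, F)`: the signature `S` consists of the disjoint
finite sets `Exo` of exogenous and `Endo` of endogenous variables together with a finite
nonempty range `range Γ w` of possible values for each variable `Γ` at each world `w`;
`World` is a finite set of possible worlds, `Rel` is the accessibility relation, and `eqs`
assigns to each endogenous variable `X` and world `w` a structural equation computing the
value of `(X,w)` from the values of all the other variables (it does not depend on the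
coordinate `(X,w)` itself, and its value lies in the range of `(X,w)`). -/
structure CKM where
  Exo : Type
  Endo : Type
  World : Type
  Val : Type
  exoFin : Fintype Exo
  endoFin : Fintype Endo
  worldFin : Fintype World
  Rel : World → World → Prop
  range : (Exo ⊕ Endo) → World → Finset Val
  range_nonempty : ∀ Γ w, (range Γ w).Nonempty
  eqs : Endo → World → (((Exo ⊕ Endo) × World) → Val) → Val
  eqs_mem : ∀ X w g, eqs X w g ∈ range (Sum.inr X) w
  eqs_indep : ∀ X w g g',
    (∀ p, p ≠ (Sum.inr X, w) → g p = g' p) → eqs X w g = eqs X w g'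

namespace CKM

/-- A context assigns to every exogenous variable at every world a value in its range. -/
def ValidContext (K : CKM) (t : K.Exo → K.World → K.Val) : Prop :=
  ∀ U w, t U w ∈ K.range (Sum.inl U) w

/-- `v` is a solution of the causal Kripke setting `(K, t)`: it agrees with the context `t`
on all exogenous variables and satisfies all structural equations. -/
def Solves (K : CKM) (t : K.Exo → K.World → K.Val)
    (v : ((K.Exo ⊕ K.Endo) × K.World) → K.Val) : Prop :=
  (∀ U w, v (Sum.inl U, w) = t U w) ∧ ∀ X w, v (Sum.inr X, w) = K.eqs X w v

/-- The variable `p` influences the (endogenous) variable `q` (i.e. `q` directly causally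
depends on `p`): some change in the value of `p`, keeping all other variables fixed
(within their ranges), changes the value of the structural equation of `q`. -/
def Influences (K : CKM) (p q : (K.Exo ⊕ K.Endo) × K.World) : Prop :=
  ∃ X w, q = (Sum.inr X, w) ∧
    ∃ g g', (∀ r, g r ∈ K.range r.1 r.2) ∧ (∀ r, g' r ∈ K.range r.1 r.2) ∧
      (∀ r, r ≠ p → g r = g' r) ∧ K.eqs X w g ≠ K.eqs X w g'

/-- A causal Kripke model is recursive if it contains no cyclic dependencies. -/
def Recursive (K : CKM) : Prop :=
  ∀ p, ¬ Relation.TransGen K.Influences p p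

/-- The causal Kripke model obtained from `K` by the intervention setting the variables in
`dom` to the values prescribed by `val`. -/
def doInt (K : CKM) (dom : Finset (K.Endo × K.World)) (val : K.Endo × K.World → K.Val) :
    CKM :=
  { K with
    eqs := fun X w g =>
      if (X, w) ∈ dom ∧ val (X, w) ∈ K.range (Sum.inr X) w then val (X, w)
      else K.eqs X w g
    eqs_mem := by
      intro X w g
      by_cases h : (X, w) ∈ dom ∧ val (X, w) ∈ K.range (Sum.inr X) w
      · simp only [if_pos h]; exact h.2
      · simp only [if_neg h]; exact K.eqs_mem X w g
    eqs_indep := by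
      intro X w g g' hgg'
      by_cases h : (X, w) ∈ dom ∧ val (X, w) ∈ K.range (Sum.inr X) w
      · simp only [if_pos h]
      · simp only [if_neg h]; exact K.eqs_indep X w g g' hgg' }

end CKM

/-- Events (modal-Boolean combinations of primitive events): primitive events `X = x` and
`(X,w) = x`, negation, conjunction and the modal operator `□`. -/
inductive Event (E W V : Type) : Type
  | eq : E → V → Event E W V
  | eqAt : E → W → V → Event E W V
  | neg : Event E W V → Event E W V
  | conj : Event E W V → Event E W V → Event E W V
  | box : Event E W V → Event E W V

namespace CKM

/-- Satisfaction of an event at a world of `K`, relative to a solution `v` of the setting. -/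
def SatE (K : CKM) (v : ((K.Exo ⊕ K.Endo) × K.World) → K.Val) :
    K.World → Event K.Endo K.World K.Val → Prop
  | w, .eq X x => v (Sum.inr X, w) = x
  | _, .eqAt X w' x => v (Sum.inr X, w') = x
  | w, .neg α => ¬ SatE K v w α
  | w, .conj α β => SatE K v w α ∧ SatE K v w β
  | w, .box α => ∀ w', K.Rel w w' → SatE K v w' α

/-- `(K,t,w) ⊩ [dom ← val] α` : the event `α` holds at `w` in the model obtained from the
intervention `dom ← val`, in the context `t`. -/
def SatI (K : CKM) (t : K.Exo → K.World → K.Val) (dom : Finset (K.Endo × K.World))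
    (val : K.Endo × K.World → K.Val) (w : K.World) (α : Event K.Endo K.World K.Val) :
    Prop :=
  ∀ v, (K.doInt dom val).Solves t v → (K.doInt dom val).SatE v w α

/-- AC1 : `α` actually holds at `w`, and each conjunct `(X_i, w_j) = y_ij` of `Y = y`
actually holds. -/
def AC1 (K : CKM) (t : K.Exo → K.World → K.Val) (w : K.World)
    (Y : Finset (K.Endo × K.World)) (y : K.Endo × K.World → K.Val)
    (α : Event K.Endo K.World K.Val) : Prop :=
  ∀ v, K.Solves t v → K.SatE v w α ∧ ∀ p ∈ Y, v (Sum.inr p.1, p.2) = y p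

/-- AC2a together with AC2bᵒ (they share the partition `Z`, `N` and the setting `n`):
there is a partition of the endogenous variables into `Z ⊇ Y` and `N` and settings `y'`
of `Y` and `n` of `N` such that `(K,t,w) ⊩ [Y ← y', N ← n] ¬α`, and, where `z*` are the
actual values of the variables of `Z`, for every subset `Z'` of `Z \ Y`,
`(K,t,w) ⊩ [Y ← y, N ← n, Z' ← z'*] α`. -/
def AC2o (K : CKM) (t : K.Exo → K.World → K.Val) (w : K.World)
    (Y : Finset (K.Endo × K.World)) (y : K.Endo × K.World → K.Val)
    (α : Event K.Endo K.World K.Val) : Prop :=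
  ∃ Z N : Finset (K.Endo × K.World), ∃ y' n : K.Endo × K.World → K.Val,
    Y ⊆ Z ∧ Disjoint Z N ∧ (∀ p : K.Endo × K.World, p ∈ Z ∨ p ∈ N) ∧
    (∀ p ∈ Y, y' p ∈ K.range (Sum.inr p.1) p.2) ∧
    (∀ p ∈ N, n p ∈ K.range (Sum.inr p.1) p.2) ∧
    K.SatI t (Y ∪ N) (fun p => if p ∈ Y then y' p else n p) w (.neg α) ∧
    ∀ v, K.Solves t v → ∀ Z' ⊆ Z \ Y,
      K.SatI t (Y ∪ N ∪ Z')
        (fun p => if p ∈ Y then y p else if p ∈ N then n p else v (Sum.inr p.1, p.2)) w α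

/-- AC2a together with AC2bᵘ (updated definition): as in `AC2o`, but moreover the
restoration of the actual values `z'*` must keep `α` true for every subset `N'` of `N`. -/
def AC2u (K : CKM) (t : K.Exo → K.World → K.Val) (w : K.World)
    (Y : Finset (K.Endo × K.World)) (y : K.Endo × K.World → K.Val)
    (α : Event K.Endo K.World K.Val) : Prop :=
  ∃ Z N : Finset (K.Endo × K.World), ∃ y' n : K.Endo × K.World → K.Val,
    Y ⊆ Z ∧ Disjoint Z N ∧ (∀ p : K.Endo × K.World, p ∈ Z ∨ p ∈ N) ∧
    (∀ p ∈ Y, y' p ∈ K.range (Sum.inr p.1) p.2) ∧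
    (∀ p ∈ N, n p ∈ K.range (Sum.inr p.1) p.2) ∧
    K.SatI t (Y ∪ N) (fun p => if p ∈ Y then y' p else n p) w (.neg α) ∧
    ∀ v, K.Solves t v → ∀ Z' ⊆ Z \ Y, ∀ N' ⊆ N,
      K.SatI t (Y ∪ N' ∪ Z')
        (fun p => if p ∈ Y then y p else if p ∈ N' then n p else v (Sum.inr p.1, p.2)) w α

/-- AC2aᵐ (modified definition): there are a set `N` of endogenous variables and a setting
`y'` of the variables in `Y` such that, where `n*` are the actual values of the variables
in `N`, `(K,t,w) ⊩ [Y ← y', N ← n*] ¬α`. -/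
def AC2m (K : CKM) (t : K.Exo → K.World → K.Val) (w : K.World)
    (Y : Finset (K.Endo × K.World)) (y : K.Endo × K.World → K.Val)
    (α : Event K.Endo K.World K.Val) : Prop :=
  ∃ N : Finset (K.Endo × K.World), ∃ y' : K.Endo × K.World → K.Val,
    (∀ p ∈ Y, y' p ∈ K.range (Sum.inr p.1) p.2) ∧
    ∀ v, K.Solves t v →
      K.SatI t (Y ∪ N)
        (fun p => if p ∈ Y then y' p else v (Sum.inr p.1, p.2)) w (.neg α)

/-- `Y = y` is an actual cause of `α` in `(K,t)` at `w` by the ORIGINAL HP definition. -/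
def IsCauseO (K : CKM) (t : K.Exo → K.World → K.Val) (w : K.World)
    (Y : Finset (K.Endo × K.World)) (y : K.Endo × K.World → K.Val)
    (α : Event K.Endo K.World K.Val) : Prop :=
  K.AC1 t w Y y α ∧ K.AC2o t w Y y α ∧
    ∀ Y' ⊂ Y, ∀ y'' : K.Endo × K.World → K.Val,
      ¬ (K.AC1 t w Y' y'' α ∧ K.AC2o t w Y' y'' α)

/-- `Y = y` is an actual cause of `α` in `(K,t)` at `w` by the UPDATED HP definition. -/
def IsCauseU (K : CKM) (t : K.Exo → K.World → K.Val) (w : K.World)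
    (Y : Finset (K.Endo × K.World)) (y : K.Endo × K.World → K.Val)
    (α : Event K.Endo K.World K.Val) : Prop :=
  K.AC1 t w Y y α ∧ K.AC2u t w Y y α ∧
    ∀ Y' ⊂ Y, ∀ y'' : K.Endo × K.World → K.Val,
      ¬ (K.AC1 t w Y' y'' α ∧ K.AC2u t w Y' y'' α)

/-- `Y = y` is an actual cause of `α` in `(K,t)` at `w` by the MODIFIED HP definition. -/
def IsCauseM (K : CKM) (t : K.Exo → K.World → K.Val) (w : K.World)
    (Y : Finset (K.Endo × K.World)) (y : K.Endo × K.World → K.Val)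
    (α : Event K.Endo K.World K.Val) : Prop :=
  K.AC1 t w Y y α ∧ K.AC2m t w Y y α ∧
    ∀ Y' ⊂ Y, ∀ y'' : K.Endo × K.World → K.Val,
      ¬ (K.AC1 t w Y' y'' α ∧ K.AC2m t w Y' y'' α)

/-- `(X,w) = x` is part of a cause of `α` in `(K,t)` at `w'` by the original HP
definition: it is a conjunct of some actual cause `Y = y` of `α` at `w'`. -/
def PartOfCauseO (K : CKM) (t : K.Exo → K.World → K.Val) (w' : K.World)
    (X : K.Endo) (w : K.World) (x : K.Val) (α : Event K.Endo K.World K.Val) : Prop :=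
  ∃ Y y, K.IsCauseO t w' Y y α ∧ (X, w) ∈ Y ∧ y (X, w) = x

/-- `(X,w) = x` is part of a cause of `α` in `(K,t)` at `w'` by the updated HP
definition. -/
def PartOfCauseU (K : CKM) (t : K.Exo → K.World → K.Val) (w' : K.World)
    (X : K.Endo) (w : K.World) (x : K.Val) (α : Event K.Endo K.World K.Val) : Prop :=
  ∃ Y y, K.IsCauseU t w' Y y α ∧ (X, w) ∈ Y ∧ y (X, w) = x

/-- `(X,w) = x` is part of a cause of `α` in `(K,t)` at `w'` by the modified HP
definition. -/
def PartOfCauseM (K : CKM) (t : K.Exo → K.World → K.Val) (w' : K.World)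
    (X : K.Endo) (w : K.World) (x : K.Val) (α : Event K.Endo K.World K.Val) : Prop :=
  ∃ Y y, K.IsCauseM t w' Y y α ∧ (X, w) ∈ Y ∧ y (X, w) = x

end CKM

/-- `Y = y` is an actual cause of `α` in `(K,t)` at `w` by all three HP definitions
(original, updated, and modified). -/
def CKM.IsCauseAll (K : CKM) (t : K.Exo → K.World → K.Val) (w : K.World)
    (Y : Finset (K.Endo × K.World)) (y : K.Endo × K.World → K.Val)
    (α : Event K.Endo K.World K.Val) : Prop :=
  K.IsCauseO t w Y y α ∧ K.IsCauseU t w Y y α ∧ K.IsCauseM t w Y y α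

/-- Exogenous variables of the Navigation example: `U = (U1, U2, U3, U4)`. -/
inductive NavExo : Type
  | u1 | u2 | u3 | u4
deriving DecidableEq

instance : Fintype NavExo :=
  ⟨{NavExo.u1, NavExo.u2, NavExo.u3, NavExo.u4}, fun x => by cases x <;> simp⟩

/-- Endogenous variables of the Navigation example: `pB`, `pC`, `pD` = "the current
location of Alice is B (resp. C, D)", `q` = "point A is to the east of Alice's current
location", `r` = "Alice moves to the east". -/
inductive NavEndo : Type
  | pB | pC | pD | q | r
deriving DecidableEq

instance : Fintype NavEndo :=
  ⟨{NavEndo.pB, NavEndo.pC, NavEndo.pD, NavEndo.q, NavEndo.r}, fun x => by cases x <;> simp⟩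

/-- The Navigation causal Kripke model: worlds `w1, w2, w3` (as `Fin 3`), total
accessibility relation `Rel = W × W`, binary variables with `(pB,w) = (U1,w)`,
`(pC,w) = (U2,w)`, `(pD,w) = (U3,w)`, `(q,w) = (U4,w)` and `r = □q` at every world. -/
@[reducible] def navigation : CKM where
  Exo := NavExo
  Endo := NavEndo
  World := Fin 3
  Val := Bool
  exoFin := inferInstance
  endoFin := inferInstance
  worldFin := inferInstance
  Rel := fun _ _ => True
  range := fun _ _ => Finset.univ
  range_nonempty := fun _ _ => ⟨true, Finset.mem_univ _⟩
  eqs := fun X w g =>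
    match X with
    | .pB => g (Sum.inl NavExo.u1, w)
    | .pC => g (Sum.inl NavExo.u2, w)
    | .pD => g (Sum.inl NavExo.u3, w)
    | .q => g (Sum.inl NavExo.u4, w)
    | .r =>
        if ∀ w' : Fin 3, g (Sum.inr NavEndo.q, w') = true then true else false
  eqs_mem := fun _ _ _ => Finset.mem_univ _
  eqs_indep := by
    intro X w g g' h
    cases X with
    | pB => exact h (Sum.inl NavExo.u1, w) (by simp)
    | pC => exact h (Sum.inl NavExo.u2, w) (by simp)
    | pD => exact h (Sum.inl NavExo.u3, w) (by simp)
    | q => exact h (Sum.inl NavExo.u4, w) (by simp)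
    | r =>
      have hq : ∀ w' : Fin 3, g (Sum.inr NavEndo.q, w') = g' (Sum.inr NavEndo.q, w') :=
        fun w' => h _ (by simp)
      simp only [hq]

/-- The context of the Navigation example: `U = (U1,U2,U3,U4)` is set to `(1,0,0,1)` at
`w1`, `(0,1,0,1)` at `w2` and `(0,0,1,1)` at `w3`. -/
def navigationCtx : NavExo → Fin 3 → Bool := fun U w =>
  match U with
  | NavExo.u1 => decide (w = 0)
  | NavExo.u2 => decide (w = 1)
  | NavExo.u3 => decide (w = 2)
  | NavExo.u4 => true

section Helpers

open NavEndo NavExo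

lemma doInt_solves_iff (dom : Finset (NavEndo × Fin 3)) (val : NavEndo × Fin 3 → Bool)
    (v : ((NavExo ⊕ NavEndo) × Fin 3) → Bool) :
    (navigation.doInt dom val).Solves navigationCtx v ↔
    ((∀ U w, v (Sum.inl U, w) = navigationCtx U w) ∧
    ∀ X w, v (Sum.inr X, w) =
      if (X, w) ∈ dom then val (X, w) else navigation.eqs X w v) := by
  unfold CKM.Solves CKM.doInt
  simp [navigation]

lemma plain_solves_iff (v : ((NavExo ⊕ NavEndo) × Fin 3) → Bool) :
    navigation.Solves navigationCtx v ↔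
    (navigation.doInt ∅ (fun _ => true)).Solves navigationCtx v := by
  unfold CKM.Solves CKM.doInt
  simp

lemma sol_q (dom : Finset (NavEndo × Fin 3)) (val : NavEndo × Fin 3 → Bool)
    (v : ((NavExo ⊕ NavEndo) × Fin 3) → Bool)
    (hv : (navigation.doInt dom val).Solves navigationCtx v) (w : Fin 3) :
    v (Sum.inr NavEndo.q, w) = if (NavEndo.q, w) ∈ dom then val (NavEndo.q, w) else true := by
  obtain ⟨h1, h2⟩ := (doInt_solves_iff dom val v).1 hv
  rw [h2 NavEndo.q w]
  have : navigation.eqs NavEndo.q w v = v (Sum.inl NavExo.u4, w) := rfl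
  rw [this, h1]
  rfl

lemma sol_r (dom : Finset (NavEndo × Fin 3)) (val : NavEndo × Fin 3 → Bool)
    (v : ((NavExo ⊕ NavEndo) × Fin 3) → Bool)
    (hv : (navigation.doInt dom val).Solves navigationCtx v) (w : Fin 3) :
    v (Sum.inr NavEndo.r, w) = if (NavEndo.r, w) ∈ dom then val (NavEndo.r, w)
      else (if (∀ w' : Fin 3, v (Sum.inr NavEndo.q, w') = true) then true else false) := by
  obtain ⟨h1, h2⟩ := (doInt_solves_iff dom val v).1 hv
  rw [h2 NavEndo.r w]

end Helpers
section Helpers2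

open NavEndo NavExo

/-- The explicit solution of the intervened Navigation model. -/
def navSol (dom : Finset (NavEndo × Fin 3)) (val : NavEndo × Fin 3 → Bool) :
    ((NavExo ⊕ NavEndo) × Fin 3) → Bool := fun p =>
  match p with
  | (Sum.inl U, w) => navigationCtx U w
  | (Sum.inr X, w) =>
    if (X, w) ∈ dom then val (X, w) else
    match X with
    | NavEndo.pB => navigationCtx NavExo.u1 w
    | NavEndo.pC => navigationCtx NavExo.u2 w
    | NavEndo.pD => navigationCtx NavExo.u3 w
    | NavEndo.q => true
    | NavEndo.r =>
        if (∀ w' : Fin 3, (if (NavEndo.q, w') ∈ dom then val (NavEndo.q, w') else true) = true)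
        then true else false

lemma navSol_q (dom : Finset (NavEndo × Fin 3)) (val : NavEndo × Fin 3 → Bool) (w : Fin 3) :
    navSol dom val (Sum.inr NavEndo.q, w) =
      if (NavEndo.q, w) ∈ dom then val (NavEndo.q, w) else true := rfl

lemma navSol_solves (dom : Finset (NavEndo × Fin 3)) (val : NavEndo × Fin 3 → Bool) :
    (navigation.doInt dom val).Solves navigationCtx (navSol dom val) := by
  rw [doInt_solves_iff]
  refine ⟨fun U w => rfl, fun X w => ?_⟩
  by_cases h : (X, w) ∈ dom
  · simp only [navSol, if_pos h]
  · simp only [navSol, if_neg h]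
    cases X <;> rfl

lemma plain_sol_q (v : ((NavExo ⊕ NavEndo) × Fin 3) → Bool)
    (hv : navigation.Solves navigationCtx v) (w : Fin 3) :
    v (Sum.inr NavEndo.q, w) = true := by
  have := sol_q ∅ (fun _ => true) v ((plain_solves_iff v).1 hv) w
  simpa using this

lemma plain_sol_r (v : ((NavExo ⊕ NavEndo) × Fin 3) → Bool)
    (hv : navigation.Solves navigationCtx v) (w : Fin 3) :
    v (Sum.inr NavEndo.r, w) = true := by
  have := sol_r ∅ (fun _ => true) v ((plain_solves_iff v).1 hv) w
  simp only [Finset.notMem_empty, if_false] at this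
  rw [this, if_pos (fun w' => plain_sol_q v hv w')]

lemma plain_solves : navigation.Solves navigationCtx (navSol ∅ (fun _ => true)) :=
  (plain_solves_iff _).2 (navSol_solves ∅ (fun _ => true))

lemma navSol_congr (dom : Finset (NavEndo × Fin 3)) (val₁ val₂ : NavEndo × Fin 3 → Bool)
    (hval : ∀ p ∈ dom, val₁ p = val₂ p) (p : (NavExo ⊕ NavEndo) × Fin 3) :
    navSol dom val₁ p = navSol dom val₂ p := by
  obtain ⟨X | X, w⟩ := p
  · rfl
  · simp only [navSol]
    by_cases h : (X, w) ∈ dom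
    · rw [if_pos h, if_pos h, hval _ h]
    · rw [if_neg h, if_neg h]
      cases X <;> try rfl
      have : (∀ w' : Fin 3, (if (NavEndo.q, w') ∈ dom then val₁ (NavEndo.q, w') else true) = true)
          ↔ (∀ w' : Fin 3, (if (NavEndo.q, w') ∈ dom then val₂ (NavEndo.q, w') else true) = true) := by
        apply forall_congr'
        intro w'
        by_cases hq : (NavEndo.q, w') ∈ dom
        · rw [if_pos hq, if_pos hq, hval _ hq]
        · rw [if_neg hq, if_neg hq]
      simp only [this]

end Helpers2
section Main

open NavEndo NavExo

lemma AC1_pos (i : Fin 3) :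
    navigation.AC1 navigationCtx 0 {(NavEndo.q, i)} (fun _ => true) (Event.eq NavEndo.r true) := by
  intro v hv
  refine ⟨plain_sol_r v hv 0, ?_⟩
  intro p hp
  simp only [Finset.mem_singleton] at hp
  subst hp
  exact plain_sol_q v hv i

lemma AC2_neg_part (i : Fin 3) (val : NavEndo × Fin 3 → Bool)
    (dom : Finset (NavEndo × Fin 3)) (hqd : (NavEndo.q, i) ∈ dom)
    (hrd : (NavEndo.r, (0 : Fin 3)) ∉ dom) (hval : val (NavEndo.q, i) = false)
    (u : ((NavExo ⊕ NavEndo) × Fin 3) → Bool)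
    (hu : (navigation.doInt dom val).Solves navigationCtx u) :
    ¬ (u (Sum.inr NavEndo.r, (0 : Fin 3)) = true) := by
  have hq : u (Sum.inr NavEndo.q, i) = false := by
    rw [sol_q _ _ u hu i, if_pos hqd, hval]
  rw [sol_r _ _ u hu 0, if_neg hrd]
  split_ifs with h
  · have := h i
    rw [hq] at this
    simp at this
  · simp

lemma AC2_pos_part (val : NavEndo × Fin 3 → Bool) (dom : Finset (NavEndo × Fin 3))
    (hvq : ∀ w : Fin 3, (NavEndo.q, w) ∈ dom → val (NavEndo.q, w) = true)
    (hvr : (NavEndo.r, (0 : Fin 3)) ∈ dom → val (NavEndo.r, (0 : Fin 3)) = true)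
    (u : ((NavExo ⊕ NavEndo) × Fin 3) → Bool)
    (hu : (navigation.doInt dom val).Solves navigationCtx u) :
    u (Sum.inr NavEndo.r, (0 : Fin 3)) = true := by
  have hq : ∀ w : Fin 3, u (Sum.inr NavEndo.q, w) = true := by
    intro w
    rw [sol_q _ _ u hu w]
    split_ifs with h
    · exact hvq w h
    · rfl
  rw [sol_r _ _ u hu 0]
  split_ifs with h h2
  all_goals first | exact hvr h | rfl | exact absurd hq h2

lemma AC2o_pos (i : Fin 3) :
    navigation.AC2o navigationCtx 0 {(NavEndo.q, i)} (fun _ => true) (Event.eq NavEndo.r true) := by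
  refine ⟨Finset.univ, ∅, fun _ => false, fun _ => true, Finset.subset_univ _, by simp,
    fun p => Or.inl (Finset.mem_univ p), fun p _ => Finset.mem_univ _,
    fun p _ => Finset.mem_univ _, ?_, ?_⟩
  · intro u hu
    show ¬ (u (Sum.inr NavEndo.r, (0 : Fin 3)) = true)
    exact AC2_neg_part i _ _ (by simp) (by simp [Prod.ext_iff]) (by simp) u hu
  · intro v hv Z' hZ' u hu
    show u (Sum.inr NavEndo.r, (0 : Fin 3)) = true
    refine AC2_pos_part _ _ ?_ ?_ u hu
    · intro w hw
      split_ifs <;> first | rfl | exact plain_sol_q v hv w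
    · intro h
      split_ifs <;> first | rfl | exact plain_sol_r v hv 0

lemma AC2u_pos (i : Fin 3) :
    navigation.AC2u navigationCtx 0 {(NavEndo.q, i)} (fun _ => true) (Event.eq NavEndo.r true) := by
  refine ⟨Finset.univ, ∅, fun _ => false, fun _ => true, Finset.subset_univ _, by simp,
    fun p => Or.inl (Finset.mem_univ p), fun p _ => Finset.mem_univ _,
    fun p _ => Finset.mem_univ _, ?_, ?_⟩
  · intro u hu
    show ¬ (u (Sum.inr NavEndo.r, (0 : Fin 3)) = true)
    exact AC2_neg_part i _ _ (by simp) (by simp [Prod.ext_iff]) (by simp) u hu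
  · intro v hv Z' hZ' N' hN' u hu
    show u (Sum.inr NavEndo.r, (0 : Fin 3)) = true
    refine AC2_pos_part _ _ ?_ ?_ u hu
    · intro w hw
      split_ifs <;> first | rfl | exact plain_sol_q v hv w
    · intro h
      split_ifs <;> first | rfl | exact plain_sol_r v hv 0

lemma AC2m_pos (i : Fin 3) :
    navigation.AC2m navigationCtx 0 {(NavEndo.q, i)} (fun _ => true) (Event.eq NavEndo.r true) := by
  refine ⟨∅, fun _ => false, fun p _ => Finset.mem_univ _, ?_⟩
  intro v hv u hu
  show ¬ (u (Sum.inr NavEndo.r, (0 : Fin 3)) = true)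
  exact AC2_neg_part i _ _ (by simp) (by simp [Prod.ext_iff]) (by simp) u hu

lemma not_AC2o_empty (y'' : NavEndo × Fin 3 → Bool) :
    ¬ navigation.AC2o navigationCtx 0 ∅ y'' (Event.eq NavEndo.r true) := by
  rintro ⟨Z, N, y', n, -, -, -, -, -, hneg, hpos⟩
  have h2 := hpos (navSol ∅ (fun _ => true)) plain_solves ∅ (Finset.empty_subset _)
  simp only [Finset.union_empty, Finset.empty_union] at hneg h2
  have h1 := hneg _ (navSol_solves N _)
  have h3 := h2 _ (navSol_solves N _)
  simp only [CKM.SatE] at h1 h3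
  exact h1 ((navSol_congr N _ _ (fun p hp => by simp [hp]) _).trans h3)

lemma not_AC2u_empty (y'' : NavEndo × Fin 3 → Bool) :
    ¬ navigation.AC2u navigationCtx 0 ∅ y'' (Event.eq NavEndo.r true) := by
  rintro ⟨Z, N, y', n, -, -, -, -, -, hneg, hpos⟩
  have h2 := hpos (navSol ∅ (fun _ => true)) plain_solves ∅ (Finset.empty_subset _)
    N (Finset.Subset.refl N)
  simp only [Finset.union_empty, Finset.empty_union] at hneg h2
  have h1 := hneg _ (navSol_solves N _)
  have h3 := h2 _ (navSol_solves N _)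
  simp only [CKM.SatE] at h1 h3
  exact h1 ((navSol_congr N _ _ (fun p hp => by simp [hp]) _).trans h3)

lemma not_AC2m_empty (y'' : NavEndo × Fin 3 → Bool) :
    ¬ navigation.AC2m navigationCtx 0 ∅ y'' (Event.eq NavEndo.r true) := by
  rintro ⟨N, y', -, h⟩
  have hh := h (navSol ∅ (fun _ => true)) plain_solves
  simp only [Finset.empty_union] at hh
  have h1 := hh _ (navSol_solves N _)
  simp only [CKM.SatE] at h1
  apply h1
  refine AC2_pos_part _ _ ?_ ?_ _ (navSol_solves N _)
  · intro w hw
    simp [navSol]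
  · intro h'
    simp [navSol]

lemma nav_cause (i : Fin 3) :
    navigation.IsCauseAll navigationCtx 0 {(NavEndo.q, i)} (fun _ => true)
      (Event.eq NavEndo.r true) := by
  refine ⟨⟨AC1_pos i, AC2o_pos i, ?_⟩, ⟨AC1_pos i, AC2u_pos i, ?_⟩,
    ⟨AC1_pos i, AC2m_pos i, ?_⟩⟩ <;>
  · intro Y' hY' y'' hc
    rw [Finset.ssubset_singleton_iff.1 hY'] at hc
    first
    | exact not_AC2o_empty y'' hc.2
    | exact not_AC2u_empty y'' hc.2
    | exact not_AC2m_empty y'' hc.2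

end Main
/-- In the Navigation causal Kripke setting, each of the primitive
events `(q,w1) = 1`, `(q,w2) = 1`, and `(q,w3) = 1` is an actual cause of `r = 1` at
world `w1` by all three HP definitions (original, updated, and modified). -/
theorem navigation_causes :
    navigation.IsCauseAll navigationCtx 0 {(NavEndo.q, (0 : Fin 3))} (fun _ => true)
      (Event.eq NavEndo.r true) ∧
    navigation.IsCauseAll navigationCtx 0 {(NavEndo.q, (1 : Fin 3))} (fun _ => true)
      (Event.eq NavEndo.r true) ∧
    navigation.IsCauseAll navigationCtx 0 {(NavEndo.q, (2 : Fin 3))} (fun _ => true)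
      (Event.eq NavEndo.r true) := by
  exact ⟨nav_cause 0, nav_cause 1, nav_cause 2⟩
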